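/- Let Q_1 be a real symmetric positive semidefinite n×n matrix with factorization Q_1 = R_1^T R_1, let c_1 ∈ ℝ^n and b_1 ∈ ℝ. Then for any x ∈ ℝ^n, the inequality x^T Q_1 x + 2 c_1^T x ≤ b_1 holds if and only if the block matrix [[I, -R_1 x],[-(R_1 x)^T, -2 c_1^T x + b_1]] is positive semidefinite. -/

import Mathlib

open Matrix BigOperators

lemma posSemidef_unit_iff (M : Matrix Unit Unit ℝ) :
    M.PosSemidef ↔ 0 ≤ M () () := by
  constructor
  · intro h
    have := (posSemidef_iff_dotProduct_mulVec.mp h).2 (fun _ => 1)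
    simpa [dotProduct, Matrix.mulVec] using this
  · intro h
    rw [posSemidef_iff_dotProduct_mulVec]
    constructor
    · ext i j
      simp [Matrix.IsHermitian]
    · intro y
      have : y () * M () () * y () = M () () * (y () * y ()) := by ring
      simp only [star_trivial, dotProduct, Matrix.mulVec, Fintype.sum_unique]
      simpa [dotProduct, mul_comm, mul_assoc, mul_left_comm]
        using mul_nonneg h (mul_self_nonneg (y ()))

/-- The block matrix `[[I, -R₁x],[-(R₁x)ᵀ, -2c₁ᵀx + b₁]]`. -/
def schurBlock {k n : ℕ} (R : Matrix (Fin k) (Fin n) ℝ) (c : Fin n → ℝ)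
    (b : ℝ) (x : Fin n → ℝ) : Matrix (Fin k ⊕ Unit) (Fin k ⊕ Unit) ℝ :=
  Matrix.of fun i j =>
    match i, j with
    | Sum.inl i, Sum.inl j => (1 : Matrix (Fin k) (Fin k) ℝ) i j
    | Sum.inl i, Sum.inr _ => -(R.mulVec x i)
    | Sum.inr _, Sum.inl j => -(R.mulVec x j)
    | Sum.inr _, Sum.inr _ => -2 * (c ⬝ᵥ x) + b

theorem stmt_2 (n k : ℕ) (Q₁ : Matrix (Fin n) (Fin n) ℝ)
    (R₁ : Matrix (Fin k) (Fin n) ℝ) (hQ : Q₁ = R₁ᵀ * R₁)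
    (c₁ : Fin n → ℝ) (b₁ : ℝ) (x : Fin n → ℝ) :
    x ⬝ᵥ Q₁.mulVec x + 2 * (c₁ ⬝ᵥ x) ≤ b₁ ↔
      (schurBlock R₁ c₁ b₁ x).PosSemidef := by
  set B : Matrix (Fin k) Unit ℝ := Matrix.of fun i _ => -(R₁.mulVec x i) with hB
  set D : Matrix Unit Unit ℝ := Matrix.of fun _ _ => -2 * (c₁ ⬝ᵥ x) + b₁ with hD
  have hblock : schurBlock R₁ c₁ b₁ x = fromBlocks 1 B Bᴴ D := by
    ext i j
    cases i <;> cases j <;> simp [schurBlock, fromBlocks, B, D]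
  have hA : (1 : Matrix (Fin k) (Fin k) ℝ).PosDef := Matrix.PosDef.one
  haveI : Invertible (1 : Matrix (Fin k) (Fin k) ℝ) := invertibleOne
  rw [hblock, Matrix.PosDef.fromBlocks₁₁ B D hA, inv_one, Matrix.mul_one,
    posSemidef_unit_iff]
  have hquad : x ⬝ᵥ Q₁.mulVec x = (R₁.mulVec x) ⬝ᵥ (R₁.mulVec x) := by
    rw [hQ, ← Matrix.mulVec_mulVec, dotProduct_mulVec, Matrix.vecMul_transpose]
  have h1 : (Bᴴ * B) () () = x ⬝ᵥ Q₁.mulVec x := by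
    rw [hquad]
    simp [Matrix.mul_apply, dotProduct, hB]
  have hentry : (D - Bᴴ * B) () () = b₁ - (x ⬝ᵥ Q₁.mulVec x + 2 * (c₁ ⬝ᵥ x)) := by
    rw [Matrix.sub_apply, h1, hD]
    simp only [Matrix.of_apply]
    ring
  rw [hentry]
  constructor <;> intro h <;> linarith
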